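/- Let G be a finite undirected connected simple graph on N ≥ 2 vertices with combinatorial Laplacian L = D − A, whose eigenvalues are 0 = λ₁ < λ₂ ≤ ⋯ ≤ λ_N. Let Λ : [0, ∞) → ℝ be continuous and let z : [0, ∞) → ℝ^N be differentiable with z'(t) = −L z(t) + Λ(t) z(t), z(0) ≠ 0, and 1ᵀz(0) = 0. Then z(t) ≠ 0 and 1ᵀz(t) = 0 for all t ≥ 0, and the normalized trajectory z(t)/‖z(t)‖ converges as t → ∞ to a limit w ∈ ℝ^N with ‖w‖ = 1 and Lw = μw for some eigenvalue μ ∈ {λ₂, …, λ_N}; i.e., every trajectory of the normalized system converges to a (normalized) eigenvector of L, a fixed point of the system. -/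

import Mathlib

open Matrix Finset Set Filter SimpleGraph

/-- every trajectory of `z' = -Lz + Λ(t)z` starting with `z(0) ≠ 0` and
`1ᵀz(0) = 0` stays nonzero and orthogonal to `1`, and its normalization converges to a
normalized eigenvector of `L` for one of the eigenvalues `λ₂, …, λ_N`. -/

lemma aux_dot {N : ℕ} (v : Fin N → Fin N → ℝ)
    (horth : ∀ j k, v j ⬝ᵥ v k = if j = k then 1 else 0) (a b : Fin N → ℝ) :
    (∑ k, a k • v k) ⬝ᵥ (∑ k, b k • v k) = ∑ k, a k * b k := by
  have key : ∀ j k : Fin N, ∑ i, (a j * v j i) * (b k * v k i)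
      = a j * b k * (if j = k then 1 else 0) := by
    intro j k
    rw [← horth j k, dotProduct, Finset.mul_sum]
    exact Finset.sum_congr rfl fun i _ => by ring
  calc (∑ k, a k • v k) ⬝ᵥ (∑ k, b k • v k)
      = ∑ i, (∑ j, a j * v j i) * (∑ k, b k * v k i) := by
        simp [dotProduct, Finset.sum_apply, smul_eq_mul]
    _ = ∑ i, ∑ j, ∑ k, (a j * v j i) * (b k * v k i) := by
        exact Finset.sum_congr rfl fun i _ => by rw [Finset.sum_mul_sum]
    _ = ∑ j, ∑ k, ∑ i, (a j * v j i) * (b k * v k i) := by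
        rw [Finset.sum_comm]
        exact Finset.sum_congr rfl fun j _ => Finset.sum_comm
    _ = ∑ j, ∑ k, a j * b k * (if j = k then 1 else 0) := by
        exact Finset.sum_congr rfl fun j _ => Finset.sum_congr rfl fun k _ => key j k
    _ = ∑ k, a k * b k := by simp

lemma aux_expand {N : ℕ} (v : Fin N → Fin N → ℝ)
    (horth : ∀ j k, v j ⬝ᵥ v k = if j = k then 1 else 0) (w : Fin N → ℝ) :
    ∑ k, (v k ⬝ᵥ w) • v k = w := by
  have h1 : (Matrix.of v) * (Matrix.of v)ᵀ = 1 := by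
    ext j k
    simpa [Matrix.mul_apply, Matrix.one_apply, dotProduct] using horth j k
  have h2 : (Matrix.of v)ᵀ * (Matrix.of v) = 1 := mul_eq_one_comm.mp h1
  have h3 : (Matrix.of v)ᵀ.mulVec ((Matrix.of v).mulVec w) = w := by
    rw [Matrix.mulVec_mulVec, h2, Matrix.one_mulVec]
  funext i
  have h4 := congrFun h3 i
  simp only [Matrix.mulVec, dotProduct, Matrix.transpose_apply, Matrix.of_apply] at h4
  calc (∑ k, (v k ⬝ᵥ w) • v k) i = ∑ k, v k i * (∑ j, v k j * w j) := by
        simp [dotProduct, Finset.sum_apply, smul_eq_mul, mul_comm]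
    _ = w i := h4

lemma aux_ode (lam : ℝ) (Λ' : ℝ → ℝ) (hΛ' : Continuous Λ') (c : ℝ → ℝ)
    (hc : ∀ t ∈ Set.Ici (0:ℝ), HasDerivWithinAt c ((Λ' t - lam) * c t) (Set.Ici 0) t) :
    ∀ t ∈ Set.Ici (0:ℝ), c t = c 0 * Real.exp ((∫ s in (0:ℝ)..t, Λ' s) - lam * t) := by
  set F : ℝ → ℝ := fun t => ∫ s in (0:ℝ)..t, Λ' s with hFdef
  have hF : ∀ t : ℝ, HasDerivAt F (Λ' t) t := by
    intro t
    exact intervalIntegral.integral_hasDerivAt_right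
      (hΛ'.intervalIntegrable 0 t)
      (hΛ'.stronglyMeasurableAtFilter _ _)
      hΛ'.continuousAt
  set g : ℝ → ℝ := fun t => c t * Real.exp (lam * t - F t) with hgdef
  have hg : ∀ t ∈ Set.Ici (0:ℝ), HasDerivWithinAt g 0 (Set.Ici 0) t := by
    intro t ht
    have hE : HasDerivWithinAt (fun t => Real.exp (lam * t - F t))
        (Real.exp (lam * t - F t) * (lam - Λ' t)) (Set.Ici 0) t := by
      have : HasDerivAt (fun t => lam * t - F t) (lam - Λ' t) t := by
        have h := ((hasDerivAt_id' t).const_mul lam).sub (hF t)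
        rw [mul_one] at h
        exact h
      simpa [mul_comm] using (this.exp).hasDerivWithinAt
    have := (hc t ht).mul hE
    exact this.congr_deriv (by ring)
  intro t ht
  have hcont : ContinuousOn g (Set.Icc 0 t) :=
    fun x hx => ((hg x (Set.mem_Ici.mpr hx.1)).continuousWithinAt).mono
      (fun y hy => Set.mem_Ici.mpr hy.1)
  have hconst := constant_of_has_deriv_right_zero hcont
    (fun x hx => (hg x (Set.mem_Ici.mpr hx.1)).mono (fun y hy => le_trans hx.1 hy))
    t (Set.mem_Icc.mpr ⟨ht, le_refl t⟩)
  have hF0 : F 0 = 0 := by simp [hFdef]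
  have h5 : c t * Real.exp (lam * t - F t) = c 0 := by
    simpa [hgdef, hF0] using hconst
  have h6 := congrArg (· * Real.exp (F t - lam * t)) h5
  simp only [mul_assoc, ← Real.exp_add] at h6
  rw [show lam * t - F t + (F t - lam * t) = 0 by ring] at h6
  simpa using h6

lemma aux_mulVec_sum {N : ℕ} (L : Matrix (Fin N) (Fin N) ℝ) (g : Fin N → Fin N → ℝ) :
    L.mulVec (∑ k, g k) = ∑ k, L.mulVec (g k) := by
  rw [show (L.mulVec (∑ k, g k)) = Matrix.mulVecLin L (∑ k, g k) from rfl, map_sum]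
  rfl

theorem normalized_trajectory_converges_to_eigenvector (N : ℕ) (hN : 2 ≤ N)
    (G : SimpleGraph (Fin N)) [DecidableRel G.Adj] (hconn : G.Connected)
    (L : Matrix (Fin N) (Fin N) ℝ)
    (hL : L = Matrix.diagonal (fun i => (G.degree i : ℝ)) - G.adjMatrix ℝ)
    (lam : Fin N → ℝ) (v : Fin N → (Fin N → ℝ))
    (hmono : Monotone lam)
    (horth : ∀ j k, v j ⬝ᵥ v k = if j = k then 1 else 0)
    (heig : ∀ k, L.mulVec (v k) = lam k • v k)
    (hlam0 : lam ⟨0, by omega⟩ = 0)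
    (hgap : lam ⟨0, by omega⟩ < lam ⟨1, by omega⟩)
    (Λ : ℝ → ℝ) (hΛ : ContinuousOn Λ (Set.Ici 0))
    (z : ℝ → (Fin N → ℝ))
    (hderiv : ∀ t ∈ Set.Ici (0 : ℝ),
      HasDerivWithinAt z (-(L.mulVec (z t)) + Λ t • z t) (Set.Ici 0) t)
    (hz0 : z 0 ≠ 0) (hsum0 : ∑ i, z 0 i = 0) :
    (∀ t ∈ Set.Ici (0 : ℝ), z t ≠ 0 ∧ ∑ i, z t i = 0) ∧
    ∃ w : Fin N → ℝ, w ⬝ᵥ w = 1 ∧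
      (∃ k : Fin N, 1 ≤ (k : ℕ) ∧ L.mulVec w = lam k • w) ∧
      Filter.Tendsto (fun t => (Real.sqrt (z t ⬝ᵥ z t))⁻¹ • z t)
        Filter.atTop (nhds w) := by
  have hN0 : 0 < N := by omega
  have hN1 : 1 < N := by omega
  set e0 : Fin N := ⟨0, hN0⟩ with he0
  set e1 : Fin N := ⟨1, hN1⟩ with he1
  -- symmetry of L
  have hsym : Lᵀ = L := by
    rw [hL]
    simp [Matrix.transpose_sub, Matrix.diagonal_transpose]
  -- key dot product identity
  have hdot : ∀ (k : Fin N) (w : Fin N → ℝ), v k ⬝ᵥ L.mulVec w = lam k * (v k ⬝ᵥ w) := by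
    intro k w
    rw [Matrix.dotProduct_mulVec, ← hsym, Matrix.vecMul_transpose, heig k,
      smul_dotProduct]
    simp
  -- coefficients
  set c : Fin N → ℝ → ℝ := fun k t => v k ⬝ᵥ z t with hcdef
  -- extended Λ
  set Λ' : ℝ → ℝ := fun t => Λ (max t 0) with hΛ'def
  have hΛ'cont : Continuous Λ' :=
    hΛ.comp_continuous (continuous_id.max continuous_const) (fun x => Set.mem_Ici.mpr (le_max_right _ _))
  have hΛ'eq : ∀ t : ℝ, 0 ≤ t → Λ' t = Λ t := by
    intro t ht; simp [hΛ'def, max_eq_left ht]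
  -- coefficient derivatives
  have hcder : ∀ (k : Fin N), ∀ t ∈ Set.Ici (0:ℝ),
      HasDerivWithinAt (c k) ((Λ' t - lam k) * c k t) (Set.Ici 0) t := by
    intro k t ht
    have hzi := hasDerivWithinAt_pi.mp (hderiv t ht)
    have hsum : HasDerivWithinAt (fun t => ∑ i, v k i * z t i)
        (∑ i, v k i * (-(L.mulVec (z t)) + Λ t • z t) i) (Set.Ici 0) t :=
      HasDerivWithinAt.fun_sum (fun i _ => (hzi i).const_mul (v k i))
    have hval : ∑ i, v k i * (-(L.mulVec (z t)) + Λ t • z t) i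
        = (Λ' t - lam k) * c k t := by
      have h2 : ∑ i, v k i * (-(L.mulVec (z t)) + Λ t • z t) i
          = v k ⬝ᵥ (-(L.mulVec (z t)) + Λ t • z t) := rfl
      rw [h2, dotProduct_add, dotProduct_neg, hdot, dotProduct_smul,
        hΛ'eq t (Set.mem_Ici.mp ht)]
      simp only [smul_eq_mul, hcdef]
      ring
    rw [← hval]
    exact hsum
  set F : ℝ → ℝ := fun t => ∫ s in (0:ℝ)..t, Λ' s with hFdef
  have hck : ∀ (k : Fin N), ∀ t ∈ Set.Ici (0:ℝ),
      c k t = c k 0 * Real.exp (F t - lam k * t) :=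
    fun k => aux_ode (lam k) Λ' hΛ'cont (c k) (hcder k)
  -- expansion of z
  have hexp_z : ∀ t : ℝ, z t = ∑ k, c k t • v k := fun t => (aux_expand v horth (z t)).symm
  -- L kills the ones vector
  set ones : Fin N → ℝ := fun _ => 1 with hones
  have hL1 : L.mulVec ones = 0 := by
    rw [hL]
    funext i
    rw [Matrix.sub_mulVec]
    have hadj : (G.adjMatrix ℝ).mulVec ones i = (G.degree i : ℝ) := by
      rw [show ones = Function.const (Fin N) (1:ℝ) from rfl,
        SimpleGraph.adjMatrix_mulVec_const_apply, mul_one]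
    simp [Matrix.mulVec_diagonal, hadj, hones]
  -- eigenvectors for positive eigenvalues are orthogonal to ones
  have hlampos : ∀ k : Fin N, 1 ≤ (k:ℕ) → 0 < lam k := by
    intro k hk
    have : lam e1 ≤ lam k := hmono (by simpa [he1, Fin.le_def] using hk)
    have h0 : lam e0 < lam e1 := hgap
    have h00 : lam e0 = 0 := hlam0
    linarith
  have hortho1 : ∀ k : Fin N, 1 ≤ (k:ℕ) → v k ⬝ᵥ ones = 0 := by
    intro k hk
    have h1 : v k ⬝ᵥ L.mulVec ones = lam k * (v k ⬝ᵥ ones) := hdot k ones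
    rw [hL1, dotProduct_zero] at h1
    have := hlampos k hk
    exact by
      rcases mul_eq_zero.mp h1.symm with h | h
      · exact absurd h (ne_of_gt this)
      · exact h
  -- ones is a multiple of v e0
  have hke0 : ∀ k : Fin N, k ≠ e0 → 1 ≤ (k:ℕ) := by
    intro k hk
    have : (k:ℕ) ≠ 0 := fun h => hk (Fin.ext (by simpa [he0] using h))
    omega
  have halpha : ones = (v e0 ⬝ᵥ ones) • v e0 := by
    conv_lhs => rw [← aux_expand v horth ones]
    rw [Fintype.sum_eq_single e0]
    intro k hk
    rw [hortho1 k (hke0 k hk), zero_smul]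
  have hα_ne : v e0 ⬝ᵥ ones ≠ 0 := by
    intro h
    have := congrFun halpha e0
    rw [h, zero_smul] at this
    simpa [hones] using this
  -- dot of ones with z t
  have hones_dot : ∀ w : Fin N → ℝ, ones ⬝ᵥ w = ∑ i, w i := by
    intro w; simp [hones, dotProduct]
  have hc00 : c e0 0 = 0 := by
    have h1 : ones ⬝ᵥ z 0 = (v e0 ⬝ᵥ ones) * (v e0 ⬝ᵥ z 0) := by
      conv_lhs => rw [halpha]
      rw [smul_dotProduct]; simp
    rw [hones_dot, hsum0] at h1
    have := (mul_eq_zero.mp h1.symm).resolve_left hα_ne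
    exact this
  have hc0t : ∀ t ∈ Set.Ici (0:ℝ), c e0 t = 0 := by
    intro t ht
    rw [hck e0 t ht, hc00, zero_mul]
  -- sum of z t is 0
  have hsumz : ∀ t ∈ Set.Ici (0:ℝ), ∑ i, z t i = 0 := by
    intro t ht
    have h1 : ones ⬝ᵥ z t = (v e0 ⬝ᵥ ones) * (v e0 ⬝ᵥ z t) := by
      conv_lhs => rw [halpha]
      rw [smul_dotProduct]; simp
    rw [hones_dot] at h1
    rw [h1, show v e0 ⬝ᵥ z t = c e0 t from rfl, hc0t t ht, mul_zero]
  -- the minimal nonzero coefficient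
  have hsne : (Finset.univ.filter (fun k : Fin N => c k 0 ≠ 0)).Nonempty := by
    by_contra h
    rw [Finset.not_nonempty_iff_eq_empty, Finset.filter_eq_empty_iff] at h
    apply hz0
    rw [hexp_z 0]
    refine Finset.sum_eq_zero fun k _ => ?_
    rw [not_not.mp (h (Finset.mem_univ k)), zero_smul]
  set m : Fin N := (Finset.univ.filter (fun k : Fin N => c k 0 ≠ 0)).min' hsne with hmdef
  have hm : c m 0 ≠ 0 := by
    have := Finset.min'_mem _ hsne
    rw [Finset.mem_filter] at this
    exact this.2
  have hmin : ∀ k : Fin N, c k 0 ≠ 0 → m ≤ k := by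
    intro k hk
    exact Finset.min'_le _ k (Finset.mem_filter.mpr ⟨Finset.mem_univ k, hk⟩)
  have hm1 : 1 ≤ (m:ℕ) := hke0 m (fun h => hm (h ▸ hc00))
  have hbelow : ∀ k : Fin N, lam k < lam m → c k 0 = 0 := by
    intro k hk
    by_contra h
    exact absurd (hmono (hmin k h)) (not_le.mpr hk)
  -- the limit vector
  set μ : ℝ := lam m with hμdef
  set u : Fin N → ℝ := ∑ k, (if lam k = μ then c k 0 else 0) • v k with hudef
  have huu : u ⬝ᵥ u = ∑ k, (if lam k = μ then c k 0 else 0) * (if lam k = μ then c k 0 else 0) :=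
    aux_dot v horth _ _
  have huu_pos : 0 < u ⬝ᵥ u := by
    rw [huu]
    refine Finset.sum_pos' (fun k _ => mul_self_nonneg _) ⟨m, Finset.mem_univ m, ?_⟩
    rw [if_pos rfl]
    exact mul_self_pos.mpr hm
  have hLu : L.mulVec u = μ • u := by
    rw [hudef, aux_mulVec_sum, Finset.smul_sum]
    refine Finset.sum_congr rfl fun k _ => ?_
    rw [Matrix.mulVec_smul, heig k]
    by_cases h : lam k = μ
    · rw [h, smul_smul, smul_smul, mul_comm]
    · simp [h]
  set w : Fin N → ℝ := (Real.sqrt (u ⬝ᵥ u))⁻¹ • u with hwdef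
  have hsq_pos : 0 < Real.sqrt (u ⬝ᵥ u) := Real.sqrt_pos.mpr huu_pos
  have hww : w ⬝ᵥ w = 1 := by
    rw [hwdef, smul_dotProduct, dotProduct_smul, smul_eq_mul, smul_eq_mul,
      ← mul_assoc, ← mul_inv, Real.mul_self_sqrt (le_of_lt huu_pos)]
    exact inv_mul_cancel₀ (ne_of_gt huu_pos)
  have hLw : L.mulVec w = lam m • w := by
    rw [hwdef, Matrix.mulVec_smul, hLu, smul_comm]
  -- the rescaled trajectory
  set a : Fin N → ℝ → ℝ := fun k t => c k 0 * Real.exp (-((lam k - μ) * t)) with hadef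
  set f : ℝ → Fin N → ℝ := fun t => ∑ k, a k t • v k with hfdef
  have hzf : ∀ t ∈ Set.Ici (0:ℝ), z t = Real.exp (F t - μ * t) • f t := by
    intro t ht
    rw [hexp_z t, hfdef, Finset.smul_sum]
    refine Finset.sum_congr rfl fun k _ => ?_
    rw [hck k t ht, smul_smul]
    congr 1
    simp only [hadef]
    have hE : Real.exp (F t - lam k * t)
        = Real.exp (F t - μ * t) * Real.exp (-((lam k - μ) * t)) := by
      rw [← Real.exp_add]; congr 1; ring
    rw [hE]; ring
  -- convergence of f to u
  have hfu : Tendsto f atTop (nhds u) := by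
    rw [hfdef, hudef]
    refine tendsto_finset_sum _ fun k _ => ?_
    rcases lt_trichotomy (lam k) μ with h | h | h
    · have hc0 : c k 0 = 0 := hbelow k h
      simp only [hadef, hc0, zero_mul, if_neg (ne_of_lt h), zero_smul]
      exact tendsto_const_nhds
    · simp only [hadef, h, sub_self, zero_mul, neg_zero, Real.exp_zero, mul_one, if_pos rfl]
      exact tendsto_const_nhds
    · rw [if_neg (ne_of_gt h)]
      have hexp : Tendsto (fun t => Real.exp (-((lam k - μ) * t))) atTop (nhds 0) := by
        apply Real.tendsto_exp_atBot.comp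
        rw [tendsto_neg_atBot_iff]
        exact Tendsto.const_mul_atTop (by linarith) tendsto_id
      have : Tendsto (fun t => a k t) atTop (nhds 0) := by
        rw [hadef]
        simpa using hexp.const_mul (c k 0)
      simpa using this.smul_const (v k)
  -- dot products converge
  have hcontdot : Continuous (fun x : Fin N → ℝ => x ⬝ᵥ x) := by
    unfold dotProduct
    exact continuous_finset_sum _ fun i _ => (continuous_apply i).mul (continuous_apply i)
  have hdd : Tendsto (fun t => f t ⬝ᵥ f t) atTop (nhds (u ⬝ᵥ u)) :=
    (hcontdot.tendsto u).comp hfu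
  have hsqrt : Tendsto (fun t => Real.sqrt (f t ⬝ᵥ f t)) atTop (nhds (Real.sqrt (u ⬝ᵥ u))) :=
    (Real.continuous_sqrt.tendsto _).comp hdd
  have hinv : Tendsto (fun t => (Real.sqrt (f t ⬝ᵥ f t))⁻¹) atTop
      (nhds ((Real.sqrt (u ⬝ᵥ u))⁻¹)) :=
    hsqrt.inv₀ (ne_of_gt hsq_pos)
  have hnormf : Tendsto (fun t => (Real.sqrt (f t ⬝ᵥ f t))⁻¹ • f t) atTop (nhds w) := by
    rw [hwdef]
    exact hinv.smul hfu
  -- z nonzero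
  have hznz : ∀ t ∈ Set.Ici (0:ℝ), z t ≠ 0 := by
    intro t ht hzt
    have h1 : c m t = 0 := by rw [hcdef]; simp [hzt]
    rw [hck m t ht] at h1
    exact hm (by
      rcases mul_eq_zero.mp h1 with h | h
      · exact h
      · exact absurd h (Real.exp_ne_zero _))
  refine ⟨fun t ht => ⟨hznz t ht, hsumz t ht⟩, w, hww, ⟨m, hm1, hLw⟩, ?_⟩
  -- transfer the limit from f to z
  refine hnormf.congr' ?_
  filter_upwards [eventually_ge_atTop (0:ℝ)] with t ht
  have ht' : t ∈ Set.Ici (0:ℝ) := ht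
  have he : (0:ℝ) < Real.exp (F t - μ * t) := Real.exp_pos _
  rw [hzf t ht']
  rw [smul_dotProduct, dotProduct_smul, smul_eq_mul, smul_eq_mul, ← mul_assoc]
  rw [show Real.exp (F t - μ * t) * Real.exp (F t - μ * t) = (Real.exp (F t - μ * t))^2 by ring]
  rcases le_or_gt (f t ⬝ᵥ f t) 0 with hle | hpos
  ·
    exfalso
    have hz := hznz t ht'
    rw [hzf t ht'] at hz
    have hf_ne : f t ≠ 0 := fun h => hz (by rw [h, smul_zero])
    have : 0 < f t ⬝ᵥ f t := by
      have : f t ⬝ᵥ f t = ∑ i, f t i * f t i := rfl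
      rw [this]
      refine Finset.sum_pos' (fun i _ => mul_self_nonneg _) ?_
      obtain ⟨i, hi⟩ := Function.ne_iff.mp hf_ne
      exact ⟨i, Finset.mem_univ i, mul_self_pos.mpr hi⟩
    linarith
  · rw [Real.sqrt_mul (sq_nonneg _), Real.sqrt_sq he.le]
    rw [mul_inv, smul_smul]
    congr 1
    field_simp
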